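/- Let G be a bisplit graph with partition (X, Y, Z) where every vertex of X has a neighbor in both Y and Z, and let a ∈ X. For every x ∈ X distinct from a, the line L(a,x) intersects X exactly in {a, x}; consequently the lines L(a,x) for x ∈ X \ {a} are pairwise distinct, giving |X| - 1 distinct lines through a. -/

import Mathlib

/-- The line generated by `a` and `b` in the shortest-path metric of `G`:
`{a, b}` together with all vertices collinear with `a` and `b`. -/
def graphLine {V : Type*} (G : SimpleGraph V) (a b : V) : Set V :=
  {a, b} ∪ {c | G.dist a c + G.dist c b = G.dist a b ∨
                G.dist c a + G.dist a b = G.dist c b ∨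
                G.dist a b + G.dist b c = G.dist a c}

theorem lines_through_a_in_X {V : Type*} [Fintype V] (G : SimpleGraph V)
    (hconn : G.Connected) (X Y Z : Set V)
    (hcover : X ∪ Y ∪ Z = Set.univ)
    (hXY : Disjoint X Y) (hXZ : Disjoint X Z) (hYZ : Disjoint Y Z)
    (hYne : Y.Nonempty) (hZne : Z.Nonempty)
    (hXstable : ∀ u ∈ X, ∀ v ∈ X, ¬ G.Adj u v)
    (hYstable : ∀ u ∈ Y, ∀ v ∈ Y, ¬ G.Adj u v)
    (hZstable : ∀ u ∈ Z, ∀ v ∈ Z, ¬ G.Adj u v)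
    (hcomplete : ∀ y ∈ Y, ∀ z ∈ Z, G.Adj y z)
    (hXnbrY : ∀ x ∈ X, ∃ y ∈ Y, G.Adj x y)
    (hXnbrZ : ∀ x ∈ X, ∃ z ∈ Z, G.Adj x z)
    (a : V) (ha : a ∈ X) :
    (∀ x ∈ X, x ≠ a → graphLine G a x ∩ X = {a, x}) ∧
    Set.InjOn (fun x => graphLine G a x) (X \ {a}) ∧
    ((fun x => graphLine G a x) '' (X \ {a})).ncard = X.ncard - 1 := by
  -- distances within X are at least 2
  have hlow : ∀ u ∈ X, ∀ v ∈ X, u ≠ v → 2 ≤ G.dist u v := by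
    intro u hu v hv huv
    have h0 : G.dist u v ≠ 0 := fun h => huv (hconn.dist_eq_zero_iff.mp h)
    have h1 : G.dist u v ≠ 1 := fun h =>
      hXstable u hu v hv (SimpleGraph.dist_eq_one_iff_adj.mp h)
    omega
  -- distances within X are at most 3
  have hhigh : ∀ u ∈ X, ∀ v ∈ X, G.dist u v ≤ 3 := by
    intro u hu v hv
    obtain ⟨y, hy, huy⟩ := hXnbrY u hu
    obtain ⟨z, hz, hvz⟩ := hXnbrZ v hv
    have hyz : G.Adj y z := hcomplete y hy z hz
    have := SimpleGraph.dist_le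
      (SimpleGraph.Walk.cons huy (.cons hyz (.cons hvz.symm .nil)))
    simpa using this
  have key : ∀ x ∈ X, x ≠ a → graphLine G a x ∩ X = {a, x} := by
    intro x hx hxa
    ext c
    constructor
    · rintro ⟨hc, hcX⟩
      by_contra hne
      simp only [Set.mem_insert_iff, Set.mem_singleton_iff] at hne
      push_neg at hne
      obtain ⟨hca, hcx⟩ := hne
      rcases hc with hc | hc
      · rcases hc with rfl | hc
        · exact hca rfl
        · exact hcx hc
      · have h1 := hlow a ha c hcX (Ne.symm hca)
        have h2 := hlow c hcX x hx hcx
        have h3 := hhigh a ha x hx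
        have h4 := hlow a ha x hx (Ne.symm hxa)
        have h5 := hhigh c hcX x hx
        have h6 := hhigh a ha c hcX
        simp only [Set.mem_setOf_eq] at hc
        have e1 : G.dist c a = G.dist a c := SimpleGraph.dist_comm
        have e2 : G.dist x c = G.dist c x := SimpleGraph.dist_comm
        omega
    · rintro (rfl | rfl)
      · exact ⟨Or.inl (Or.inl rfl), ha⟩
      · exact ⟨Or.inl (Or.inr rfl), hx⟩
  refine ⟨key, ?_, ?_⟩
  · intro x1 hx1 x2 hx2 heq
    simp only [Set.mem_diff, Set.mem_singleton_iff] at hx1 hx2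
    have e1 := key x1 hx1.1 hx1.2
    have e2 := key x2 hx2.1 hx2.2
    simp only at heq
    rw [heq] at e1
    rw [e2] at e1
    have : x1 ∈ ({a, x1} : Set V) := Or.inr rfl
    rw [← e1] at this
    rcases this with h | h
    · exact absurd h hx1.2
    · exact h
  · have hinj : Set.InjOn (fun x => graphLine G a x) (X \ {a}) := by
      intro x1 hx1 x2 hx2 heq
      simp only [Set.mem_diff, Set.mem_singleton_iff] at hx1 hx2
      have e1 := key x1 hx1.1 hx1.2
      have e2 := key x2 hx2.1 hx2.2
      simp only at heq
      rw [heq, e2] at e1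
      have : x1 ∈ ({a, x1} : Set V) := Or.inr rfl
      rw [← e1] at this
      rcases this with h | h
      · exact absurd h hx1.2
      · exact h
    rw [Set.ncard_image_of_injOn hinj,
      Set.ncard_diff_singleton_of_mem ha]
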